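/- Suppose q₁ and q₂ are nonvanishing on U. Then the following are equivalent: (i) q₁·∂₁k₁ + q₂·∂₂k₁ = 0 and q₁·∂₁k₂ + q₂·∂₂k₂ = 0 hold at every point of U; (ii) the function k₁ + k₂ is constant on U. (Proposition 5(a): for a surface which is not a moulding surface, the nets corresponding to the lines of curvature of the two central surfaces are both orthogonal if and only if the surface has constant mean curvature.) -/

import Mathlib

/-- A continuous linear map on ℝ² vanishing on the standard basis is zero. -/
lemma clm_eq_zero (L : (ℝ × ℝ) →L[ℝ] ℝ) (h1 : L (1, 0) = 0) (h2 : L (0, 1) = 0) :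
    L = 0 := by
  ext
  · simpa using h1
  · simpa using h2

/-- A function with zero derivative on an open connected set is constant there. -/
lemma const_of_fderiv_zero (U : Set (ℝ × ℝ)) (hU : IsOpen U) (hUconn : IsConnected U)
    (f : ℝ × ℝ → ℝ) (hf : ∀ p ∈ U, DifferentiableAt ℝ f p)
    (h0 : ∀ p ∈ U, fderiv ℝ f p = 0) : ∃ c : ℝ, ∀ p ∈ U, f p = c := by
  obtain ⟨p₀, hp₀⟩ := hUconn.nonempty
  refine ⟨f p₀, ?_⟩
  have loc : ∀ p ∈ U, ∃ ε > 0, Metric.ball p ε ⊆ U ∧ ∀ q ∈ Metric.ball p ε, f q = f p := by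
    intro p hp
    obtain ⟨ε, hε, hball⟩ := Metric.isOpen_iff.1 hU p hp
    refine ⟨ε, hε, hball, fun q hq => ?_⟩
    refine (convex_ball p ε).is_const_of_fderivWithin_eq_zero
      (fun z hz => (hf z (hball hz)).differentiableWithinAt) (fun z hz => ?_) hq
      (Metric.mem_ball_self hε)
    rw [fderivWithin_of_isOpen Metric.isOpen_ball hz]
    exact h0 z (hball hz)
  set u : Set (ℝ × ℝ) := {p | p ∈ U ∧ f p = f p₀} with hu_def
  set v : Set (ℝ × ℝ) := {p | p ∈ U ∧ f p ≠ f p₀} with hv_def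
  have hu : IsOpen u := by
    rw [Metric.isOpen_iff]
    rintro p ⟨hpU, hpf⟩
    obtain ⟨ε, hε, hball, hconst⟩ := loc p hpU
    exact ⟨ε, hε, fun q hq => ⟨hball hq, (hconst q hq).trans hpf⟩⟩
  have hv : IsOpen v := by
    rw [Metric.isOpen_iff]
    rintro p ⟨hpU, hpf⟩
    obtain ⟨ε, hε, hball, hconst⟩ := loc p hpU
    exact ⟨ε, hε, fun q hq => ⟨hball hq, (hconst q hq).symm ▸ hpf⟩⟩
  have hdisj : Disjoint u v := by
    rw [Set.disjoint_iff]
    rintro p ⟨⟨_, h1⟩, ⟨_, h2⟩⟩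
    exact (h2 h1).elim
  have hsub : U ⊆ u ∪ v := fun p hp => by
    by_cases h : f p = f p₀
    · exact Or.inl ⟨hp, h⟩
    · exact Or.inr ⟨hp, h⟩
  have hne : (U ∩ u).Nonempty := ⟨p₀, hp₀, hp₀, rfl⟩
  have := hUconn.isPreconnected.subset_left_of_subset_union hu hv hdisj hsub hne
  exact fun p hp => (this hp).2

/-- Partial derivative in the first coordinate direction on ℝ². -/
noncomputable def pd1 (f : ℝ × ℝ → ℝ) (p : ℝ × ℝ) : ℝ := fderiv ℝ f p (1, 0)

/-- Partial derivative in the second coordinate direction on ℝ². -/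
noncomputable def pd2 (f : ℝ × ℝ → ℝ) (p : ℝ × ℝ) : ℝ := fderiv ℝ f p (0, 1)

theorem stmt_0 (U : Set (ℝ × ℝ)) (hU : IsOpen U) (hUconn : IsConnected U)
    (k₁ k₂ q₁ q₂ : ℝ × ℝ → ℝ)
    (hk₁ : ∀ p ∈ U, DifferentiableAt ℝ k₁ p)
    (hk₂ : ∀ p ∈ U, DifferentiableAt ℝ k₂ p)
    (hq₁ : ∀ p ∈ U, DifferentiableAt ℝ q₁ p)
    (hq₂ : ∀ p ∈ U, DifferentiableAt ℝ q₂ p)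
    (codazzi₁ : ∀ p ∈ U, pd2 k₁ p = q₁ p * (k₁ p - k₂ p))
    (codazzi₂ : ∀ p ∈ U, pd1 k₂ p = q₂ p * (k₁ p - k₂ p))
    (hq₁ne : ∀ p ∈ U, q₁ p ≠ 0)
    (hq₂ne : ∀ p ∈ U, q₂ p ≠ 0) :
    (∀ p ∈ U, q₁ p * pd1 k₁ p + q₂ p * pd2 k₁ p = 0 ∧
              q₁ p * pd1 k₂ p + q₂ p * pd2 k₂ p = 0) ↔
    (∃ c : ℝ, ∀ p ∈ U, k₁ p + k₂ p = c) := by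
  constructor
  · intro h
    apply const_of_fderiv_zero U hU hUconn _ (fun p hp => (hk₁ p hp).add (hk₂ p hp))
    intro p hp
    have hadd : fderiv ℝ (fun q => k₁ q + k₂ q) p = fderiv ℝ k₁ p + fderiv ℝ k₂ p :=
      fderiv_add (hk₁ p hp) (hk₂ p hp)
    -- compute pd1 k₁ and pd2 k₂ from the orthogonality conditions and Codazzi
    have e1 : pd1 k₁ p = -(q₂ p * (k₁ p - k₂ p)) := by
      have h1 := (h p hp).1
      rw [codazzi₁ p hp] at h1
      apply mul_left_cancel₀ (hq₁ne p hp)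
      linear_combination h1
    have e2 : pd2 k₂ p = -(q₁ p * (k₁ p - k₂ p)) := by
      have h2 := (h p hp).2
      rw [codazzi₂ p hp] at h2
      apply mul_left_cancel₀ (hq₂ne p hp)
      linear_combination h2
    rw [show k₁ + k₂ = fun q => k₁ q + k₂ q from rfl, hadd]
    apply clm_eq_zero
    · have : fderiv ℝ k₁ p (1, 0) + fderiv ℝ k₂ p (1, 0) = pd1 k₁ p + pd1 k₂ p := rfl
      simp only [ContinuousLinearMap.add_apply, this, e1, codazzi₂ p hp]
      ring
    · have : fderiv ℝ k₁ p (0, 1) + fderiv ℝ k₂ p (0, 1) = pd2 k₁ p + pd2 k₂ p := rfl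
      simp only [ContinuousLinearMap.add_apply, this, e2, codazzi₁ p hp]
      ring
  · rintro ⟨c, hc⟩ p hp
    have heq : (fun q => k₁ q + k₂ q) =ᶠ[nhds p] fun _ => c := by
      filter_upwards [hU.mem_nhds hp] with q hq using hc q hq
    have hzero : fderiv ℝ (fun q => k₁ q + k₂ q) p = 0 := by
      rw [heq.fderiv_eq, fderiv_const_apply]
    have hadd : fderiv ℝ (fun q => k₁ q + k₂ q) p = fderiv ℝ k₁ p + fderiv ℝ k₂ p :=
      fderiv_add (hk₁ p hp) (hk₂ p hp)
    rw [hzero] at hadd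
    have h10 : pd1 k₁ p + pd1 k₂ p = 0 := by
      have := congrArg (fun L : (ℝ × ℝ) →L[ℝ] ℝ => L (1, 0)) hadd
      simpa [pd1] using this.symm
    have h01 : pd2 k₁ p + pd2 k₂ p = 0 := by
      have := congrArg (fun L : (ℝ × ℝ) →L[ℝ] ℝ => L (0, 1)) hadd
      simpa [pd2] using this.symm
    have e1 : pd1 k₁ p = -(q₂ p * (k₁ p - k₂ p)) := by
      have := codazzi₂ p hp; linarith
    have e2 : pd2 k₂ p = -(q₁ p * (k₁ p - k₂ p)) := by
      have := codazzi₁ p hp; linarith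
    refine ⟨?_, ?_⟩
    · rw [e1, codazzi₁ p hp]; ring
    · rw [codazzi₂ p hp, e2]; ring
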